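/- Dyadic pointwise domination of the Riesz potential: Let 0 < α < n. There is a constant c = c(n,α) such that for every measurable f ≥ 0 on ℝⁿ and every x ∈ ℝⁿ, I_α f(x) ≤ c · Σ_{Q ∈ 𝒟} χ_Q(x) · |Q|^{α/n − 1} ∫_{3Q} f(y) dy, where 𝒟 is the collection of all dyadic cubes (cubes with lower-left corner 2^{−l}m and side length 2^{−l}, l ∈ ℤ, m ∈ ℤⁿ) and 3Q is the cube concentric with Q of three times the side length. -/

import Mathlib

open MeasureTheory ENNReal Set

noncomputable section

/-- Euclidean space `ℝⁿ`. -/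
abbrev Euc (n : ℕ) := EuclideanSpace ℝ (Fin n)

variable {n : ℕ}

/-- The axis-parallel closed cube with lower corner `a` and side length `h`. -/
def Cube (a : Euc n) (h : ℝ) : Set (Euc n) :=
  {x | ∀ i, a i ≤ x i ∧ x i ≤ a i + h}

/-- The weighted measure `u(E) = ∫_E u dx` of a set. -/
def wMeas (u : Euc n → ℝ) (E : Set (Euc n)) : ℝ≥0∞ :=
  ∫⁻ x in E, ENNReal.ofReal (u x)

/-- The dual exponent `p' = p/(p-1)`. -/
def dualExp (p : ℝ) : ℝ := p / (p - 1)

/-- The `A_{p,q}` constant of a weight `w` (with the `A_{1,q}` convention when `p = 1`). -/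
def Apq (p q : ℝ) (w : Euc n → ℝ) : ℝ≥0∞ :=
  ⨆ (a : Euc n) (h : ℝ) (_ : 0 < h),
    ((volume (Cube a h))⁻¹ * ∫⁻ x in Cube a h, ENNReal.ofReal (w x) ^ q) *
      (if p = 1 then
        (essSup (fun x => (ENNReal.ofReal (w x))⁻¹) (volume.restrict (Cube a h))) ^ q
      else
        ((volume (Cube a h))⁻¹ * ∫⁻ x in Cube a h,
            ENNReal.ofReal (w x) ^ (-(dualExp p))) ^ (q / dualExp p))

/-- The weighted Lebesgue norm `‖w f‖_{L^p(ℝⁿ)}`. -/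
def wLp (w f : Euc n → ℝ) (p : ℝ) : ℝ≥0∞ :=
  (∫⁻ x, (ENNReal.ofReal (w x) * ENNReal.ofReal |f x|) ^ p) ^ (1 / p)

/-- The weighted Lebesgue norm `‖w g‖_{L^q(ℝⁿ)}` of an `ℝ≥0∞`-valued function. -/
def wLpE (w : Euc n → ℝ) (g : Euc n → ℝ≥0∞) (q : ℝ) : ℝ≥0∞ :=
  (∫⁻ x, (ENNReal.ofReal (w x) * g x) ^ q) ^ (1 / q)

/-- The weak norm `‖g‖_{L^{q,∞}(u)} = sup_{λ>0} λ u({|g|>λ})^{1/q}`. -/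
def weakLp (u : Euc n → ℝ) (g : Euc n → ℝ) (q : ℝ) : ℝ≥0∞ :=
  ⨆ (t : ℝ) (_ : 0 < t), ENNReal.ofReal t * wMeas u {x | t < |g x|} ^ (1 / q)

/-- The weak norm of an `ℝ≥0∞`-valued function. -/
def weakLpE (u : Euc n → ℝ) (g : Euc n → ℝ≥0∞) (q : ℝ) : ℝ≥0∞ :=
  ⨆ (t : ℝ) (_ : 0 < t), ENNReal.ofReal t * wMeas u {x | ENNReal.ofReal t < g x} ^ (1 / q)

/-- The fractional integral (Riesz potential) `I_α f(x) = ∫ |f(y)| |x-y|^{α-n} dy`. -/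
def riesz (α : ℝ) (f : Euc n → ℝ) (x : Euc n) : ℝ≥0∞ :=
  ∫⁻ y, ENNReal.ofReal |f y| * ENNReal.ofReal (‖x - y‖ ^ (α - (n : ℝ)))

/-- The fractional maximal operator `M_α f(x) = sup_{Q ∋ x} |Q|^{α/n-1} ∫_Q |f|`. -/
def fracMax (α : ℝ) (f : Euc n → ℝ) (x : Euc n) : ℝ≥0∞ :=
  ⨆ (a : Euc n) (h : ℝ) (_ : 0 < h) (_ : x ∈ Cube a h),
    volume (Cube a h) ^ (α / (n : ℝ) - 1) * ∫⁻ y in Cube a h, ENNReal.ofReal |f y|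


/-- The lower corner of the dyadic cube indexed by `l : ℤ`, `m : ℤⁿ`, namely
`2^{-l} m`; the cube itself has side length `2^{-l}`. -/
def dyadicCorner (l : ℤ) (m : Fin n → ℤ) : Euc n :=
  WithLp.toLp 2 (fun i => (2 : ℝ) ^ (-l) * (m i : ℝ))

lemma measurableSet_cube (a : Euc n) (h : ℝ) : MeasurableSet (Cube a h) := by
  have heq : Cube a h = ⋂ i, {x : Euc n | a i ≤ x i ∧ x i ≤ a i + h} := by
    ext x; simp [Cube, Set.mem_iInter]
  rw [heq]
  have hm : ∀ i : Fin n, Measurable fun x : Euc n => x i := fun i =>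
    (measurable_pi_apply i).comp ((MeasurableEquiv.toLp 2 (Fin n → ℝ)).symm).measurable
  exact MeasurableSet.iInter fun i =>
    ((measurableSet_le measurable_const (hm i)).inter
      (measurableSet_le (hm i) measurable_const))

lemma volume_cube (a : Euc n) (h : ℝ) :
    volume (Cube a h) = ENNReal.ofReal h ^ n := by
  have hpre : Cube a h =
      ((MeasurableEquiv.toLp 2 (Fin n → ℝ)).symm) ⁻¹' (Set.univ.pi fun i => Set.Icc (a i) (a i + h)) := by
    ext x
    simp [Cube, MeasurableEquiv.coe_toLp_symm, Set.mem_pi, Set.mem_Icc, forall_and,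
      Pi.le_def, MeasurableEquiv.toLp_symm_apply]
  rw [hpre, (EuclideanSpace.volume_preserving_symm_measurableEquiv_toLp (Fin n)).measure_preimage
    (MeasurableSet.univ_pi (fun i => measurableSet_Icc)).nullMeasurableSet,
    volume_pi_pi]
  simp [Real.volume_Icc]

lemma abs_coord_le (x : Euc n) (i : Fin n) : |x i| ≤ ‖x‖ := by
  rw [EuclideanSpace.norm_eq]
  have h : |x i| = Real.sqrt (‖x i‖ ^ 2) := by rw [Real.sqrt_sq_eq_abs]; simp
  rw [h]
  exact Real.sqrt_le_sqrt
    (Finset.single_le_sum (f := fun j => ‖x j‖ ^ 2) (fun j _ => sq_nonneg _) (Finset.mem_univ i))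

lemma volume_singleton_euc (hn : 0 < n) (x : Euc n) : volume ({x} : Set (Euc n)) = 0 := by
  have hpre : ({x} : Set (Euc n)) =
      ((MeasurableEquiv.toLp 2 (Fin n → ℝ)).symm) ⁻¹'
        {((MeasurableEquiv.toLp 2 (Fin n → ℝ)).symm) x} := by
    ext y
    simp only [Set.mem_preimage, Set.mem_singleton_iff, EmbeddingLike.apply_eq_iff_eq]
  rw [hpre, (EuclideanSpace.volume_preserving_symm_measurableEquiv_toLp (Fin n)).measure_preimage
    (measurableSet_singleton _).nullMeasurableSet]
  have h2 : ({((MeasurableEquiv.toLp 2 (Fin n → ℝ)).symm) x} : Set (Fin n → ℝ)) =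
      Set.univ.pi fun i => {(((MeasurableEquiv.toLp 2 (Fin n → ℝ)).symm) x) i} := by
    ext g; simp [funext_iff, Set.mem_pi]
  rw [h2, volume_pi_pi]
  exact Finset.prod_eq_zero (Finset.mem_univ ⟨0, hn⟩) (by simp)

lemma ofReal_two_rpow (r : ℝ) : ENNReal.ofReal ((2:ℝ) ^ r) = (2:ℝ≥0∞) ^ r := by
  rw [← ENNReal.ofReal_rpow_of_pos two_pos, ENNReal.ofReal_ofNat]

lemma ofReal_two_zpow (j : ℤ) :
    ENNReal.ofReal ((2:ℝ) ^ j) = (2:ℝ≥0∞) ^ (j : ℝ) := by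
  rw [← Real.rpow_intCast 2 j]
  exact ofReal_two_rpow _

/-- Dyadic pointwise domination of the Riesz potential:
`I_α f(x) ≤ c Σ_{Q ∈ 𝒟} χ_Q(x) |Q|^{α/n-1} ∫_{3Q} f`, where `3Q` is the
concentric triple of `Q`. -/
theorem riesz_dyadic_domination
    (n : ℕ) (hn : 0 < n) (α : ℝ) (hα : 0 < α) (hαn : α < n) :
    ∃ c : ℝ, 0 < c ∧ ∀ f : Euc n → ℝ, Measurable f → (∀ x, 0 ≤ f x) → ∀ x : Euc n,
      riesz α f x ≤
        ENNReal.ofReal c *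
          ∑' (l : ℤ) (m : Fin n → ℤ),
            Set.indicator (Cube (dyadicCorner l m) ((2 : ℝ) ^ (-l)))
              (fun _ =>
                volume (Cube (dyadicCorner l m) ((2 : ℝ) ^ (-l))) ^ (α / (n : ℝ) - 1) *
                  ∫⁻ y in Cube (WithLp.toLp 2 (fun i => dyadicCorner l m i - (2 : ℝ) ^ (-l)) : Euc n)
                      (3 * (2 : ℝ) ^ (-l)), ENNReal.ofReal (f y))
              x := by
  refine ⟨2 ^ n, by positivity, fun f hf hf0 x => ?_⟩
  set S : ℤ → ℝ≥0∞ := fun l => ∑' (m : Fin n → ℤ),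
      Set.indicator (Cube (dyadicCorner l m) ((2 : ℝ) ^ (-l)))
        (fun _ =>
          volume (Cube (dyadicCorner l m) ((2 : ℝ) ^ (-l))) ^ (α / (n : ℝ) - 1) *
            ∫⁻ y in Cube (WithLp.toLp 2 (fun i => dyadicCorner l m i - (2 : ℝ) ^ (-l)) : Euc n)
                (3 * (2 : ℝ) ^ (-l)), ENNReal.ofReal (f y)) x with hS
  set A : ℤ → Set (Euc n) := fun k =>
    {y | (2:ℝ) ^ k < ‖x - y‖ ∧ ‖x - y‖ ≤ (2:ℝ) ^ (k+1)} with hA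
  have hnorm_meas : Measurable fun y : Euc n => ‖x - y‖ :=
    (continuous_const.sub continuous_id).norm.measurable
  have hAmeas : ∀ k, MeasurableSet (A k) := fun k =>
    (measurableSet_lt measurable_const hnorm_meas).inter
      (measurableSet_le hnorm_meas measurable_const)
  set C : ℤ → ℝ≥0∞ := fun k => ENNReal.ofReal (((2:ℝ) ^ k) ^ (α - (n:ℝ))) with hC
  set F : ℤ → Euc n → ℝ≥0∞ := fun k =>
    (A k).indicator fun y => ENNReal.ofReal (f y) * C k with hF
  have hFmeas : ∀ k, Measurable (F k) := fun k =>
    ((ENNReal.measurable_ofReal.comp hf).mul measurable_const).indicator (hAmeas k)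
  -- step 1
  have hae : ∀ᵐ y : Euc n, y ≠ x := by
    rw [ae_iff]
    simpa only [ne_eq, not_not, Set.setOf_eq_eq_singleton] using volume_singleton_euc hn x
  have step1 : riesz α f x ≤ ∑' k, ∫⁻ y, F k y := by
    rw [riesz, ← lintegral_tsum (fun k => (hFmeas k).aemeasurable)]
    refine lintegral_mono_ae ?_
    filter_upwards [hae] with y hy
    have ht : 0 < ‖x - y‖ := by
      rw [norm_pos_iff]; exact sub_ne_zero.mpr (Ne.symm hy)
    obtain ⟨k, hk1, hk2⟩ := exists_mem_Ioc_zpow ht one_lt_two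
    have hyA : y ∈ A k := ⟨hk1, hk2⟩
    calc ENNReal.ofReal |f y| * ENNReal.ofReal (‖x - y‖ ^ (α - (n:ℝ)))
        ≤ F k y := by
          rw [hF]
          simp only [Set.indicator_of_mem hyA]
          rw [abs_of_nonneg (hf0 y)]
          exact mul_le_mul_right (ENNReal.ofReal_le_ofReal
            (Real.rpow_le_rpow_of_nonpos (zpow_pos two_pos k) hk1.le (by linarith))) _
      _ ≤ ∑' k, F k y := ENNReal.le_tsum k
  -- step 2
  have step2 : ∀ k : ℤ, ∫⁻ y, F k y ≤ ENNReal.ofReal (2 ^ n) * S (-(k+1)) := by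
    intro k
    set l : ℤ := -(k+1) with hl
    have hlk : -l = k + 1 := by rw [hl]; ring
    set h : ℝ := (2:ℝ) ^ (-l) with hh0
    have hhk : h = (2:ℝ) ^ (k+1) := by rw [hh0, hlk]
    have hhpos : 0 < h := by rw [hh0]; exact zpow_pos two_pos _
    set m : Fin n → ℤ := fun i => ⌊x i / h⌋ with hm
    have hd : ∀ i, dyadicCorner l m i = h * (m i : ℝ) := fun i => by
      rw [hh0]; rfl
    have hxQ : x ∈ Cube (dyadicCorner l m) h := by
      intro i
      constructor
      · have h1 : (m i : ℝ) ≤ x i / h := Int.floor_le _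
        have h2 := mul_le_mul_of_nonneg_left h1 hhpos.le
        rw [mul_div_cancel₀ _ hhpos.ne'] at h2
        rw [hd i]; exact h2
      · have h2 : x i / h < (m i : ℝ) + 1 := Int.lt_floor_add_one _
        have h3 := (div_lt_iff₀ hhpos).mp h2
        rw [hd i]; nlinarith
    have hsub : A k ⊆ Cube (WithLp.toLp 2 (fun i => dyadicCorner l m i - h) : Euc n) (3 * h) := by
      intro y hy i
      have h1 : |(x - y) i| ≤ ‖x - y‖ := abs_coord_le _ i
      have h2 : (x - y) i = x i - y i := rfl
      rw [h2] at h1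
      have hb : |x i - y i| ≤ h := h1.trans (le_of_le_of_eq hy.2 hhk.symm)
      obtain ⟨hb1, hb2⟩ := abs_le.mp hb
      have hq := hxQ i
      constructor <;> [skip; skip] <;> simp only [WithLp.ofLp_toLp] <;> linarith [hq.1, hq.2]
    have key : ∫⁻ y, F k y ≤
        C k * ∫⁻ y in Cube (WithLp.toLp 2 (fun i => dyadicCorner l m i - h) : Euc n) (3 * h),
          ENNReal.ofReal (f y) := by
      rw [hF]
      simp only []
      rw [lintegral_indicator (hAmeas k),
        lintegral_mul_const _ hf.ennreal_ofReal, mul_comm]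
      exact mul_le_mul_right (lintegral_mono_set hsub) _
    have hCle : C k ≤ ENNReal.ofReal (2 ^ n) *
        (volume (Cube (dyadicCorner l m) h)) ^ (α / (n:ℝ) - 1) := by
      rw [volume_cube, hhk, hC]
      simp only []
      have e1 : ENNReal.ofReal (((2:ℝ) ^ k) ^ (α - (n:ℝ))) =
          (2:ℝ≥0∞) ^ ((k:ℝ) * (α - (n:ℝ))) := by
        rw [← Real.rpow_intCast 2 k, ← Real.rpow_mul (by norm_num : (0:ℝ) ≤ 2)]
        push_cast
        exact ofReal_two_rpow _
      have e2 : ENNReal.ofReal ((2:ℝ) ^ n) = (2:ℝ≥0∞) ^ (n:ℝ) := by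
        rw [← Real.rpow_natCast 2 n]
        exact ofReal_two_rpow _
      have e3 : (ENNReal.ofReal ((2:ℝ) ^ (k+1:ℤ)) ^ n) ^ (α / (n:ℝ) - 1) =
          (2:ℝ≥0∞) ^ (((k:ℝ)+1) * (n:ℝ) * (α / (n:ℝ) - 1)) := by
        rw [ofReal_two_zpow (k+1), ← ENNReal.rpow_natCast ((2:ℝ≥0∞) ^ ((k+1:ℤ):ℝ)) n,
          ← ENNReal.rpow_mul, ← ENNReal.rpow_mul]
        congr 1
        push_cast
        ring
      rw [e1, e2, e3, ← ENNReal.rpow_add _ _ (by norm_num) (by norm_num)]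
      apply ENNReal.rpow_le_rpow_of_exponent_le one_le_two
      have hn' : (n:ℝ) ≠ 0 := Nat.cast_ne_zero.mpr hn.ne'
      have hexp : ((k:ℝ)+1) * (n:ℝ) * (α / (n:ℝ) - 1) = ((k:ℝ)+1) * (α - (n:ℝ)) := by
        field_simp
      rw [hexp]
      nlinarith
    calc ∫⁻ y, F k y
        ≤ C k * ∫⁻ y in Cube (WithLp.toLp 2 (fun i => dyadicCorner l m i - h) : Euc n) (3 * h),
            ENNReal.ofReal (f y) := key
      _ ≤ (ENNReal.ofReal (2 ^ n) * (volume (Cube (dyadicCorner l m) h)) ^ (α / (n:ℝ) - 1)) *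
            ∫⁻ y in Cube (WithLp.toLp 2 (fun i => dyadicCorner l m i - h) : Euc n) (3 * h),
              ENNReal.ofReal (f y) := mul_le_mul_left hCle _
      _ = ENNReal.ofReal (2 ^ n) * ((volume (Cube (dyadicCorner l m) h)) ^ (α / (n:ℝ) - 1) *
            ∫⁻ y in Cube (WithLp.toLp 2 (fun i => dyadicCorner l m i - h) : Euc n) (3 * h),
              ENNReal.ofReal (f y)) := mul_assoc _ _ _
      _ ≤ ENNReal.ofReal (2 ^ n) * S l := by
          refine mul_le_mul_right ?_ _
          rw [hS]
          simp only []
          rw [hh0]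
          refine le_trans (le_of_eq ?_) (ENNReal.le_tsum m)
          rw [Set.indicator_of_mem (by rw [← hh0]; exact hxQ)]
  -- assemble
  calc riesz α f x ≤ ∑' k, ∫⁻ y, F k y := step1
    _ ≤ ∑' k : ℤ, ENNReal.ofReal (2 ^ n) * S (-(k+1)) := ENNReal.tsum_le_tsum step2
    _ = ENNReal.ofReal (2 ^ n) * ∑' k : ℤ, S (-(k+1)) := ENNReal.tsum_mul_left
    _ = ENNReal.ofReal (2 ^ n) * ∑' l, S l := by
        congr 1
        exact Equiv.tsum_eq (Function.Involutive.toPerm (fun k : ℤ => -(k+1))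
          (fun k => by ring)) S

end
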